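/- Set s_r = (1 + 1/r)^{1/2} for r ≥ 1, and define d_1 = s_1 and d_r = 1/s_{r−1} + s_r for r ≥ 2. Then for every n ≥ 1 and all complex numbers a_1, ..., a_n, Σ_{r=1}^n d_r |a_r|² − Σ_{r=2}^n (a_r ā_{r−1} + a_{r−1} ā_r) = Σ_{r=2}^n | s_{r−1}^{1/2} a_{r−1} − s_{r−1}^{−1/2} a_r |² + s_n |a_n|². In particular this quantity is non-negative, i.e. the real symmetric tridiagonal n×n matrix M₂ with diagonal entries d_r and entries −1 immediately above and below the diagonal is positive semidefinite. -/

import Mathlib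

open scoped ComplexOrder

private lemma keyid (t : ℝ) (ht : 0 < t) (z w : ℂ) :
    ‖(Real.sqrt t : ℂ) * z - ((Real.sqrt t : ℂ))⁻¹ * w‖ ^ 2
      = t * ‖z‖ ^ 2 + 1 / t * ‖w‖ ^ 2
        - (w * (starRingEnd ℂ) z + z * (starRingEnd ℂ) w).re := by
  have hc : (0:ℝ) < Real.sqrt t := Real.sqrt_pos.2 ht
  have hct : Real.sqrt t * Real.sqrt t = t := Real.mul_self_sqrt ht.le
  rw [show ((Real.sqrt t : ℂ))⁻¹ = (((Real.sqrt t)⁻¹ : ℝ) : ℂ) from (Complex.ofReal_inv _).symm]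
  simp only [Complex.sq_norm, Complex.normSq_apply, Complex.sub_re, Complex.sub_im,
    Complex.mul_re, Complex.mul_im, Complex.ofReal_re, Complex.ofReal_im,
    Complex.add_re, Complex.conj_re, Complex.conj_im]
  have h0 : Real.sqrt t ≠ 0 := ne_of_gt hc
  field_simp
  have h2 : Real.sqrt t ^ 2 = t := Real.sq_sqrt ht.le
  linear_combination (t * Real.sqrt t ^ 2 * (z.re ^ 2 + z.im ^ 2) - (w.re ^ 2 + w.im ^ 2)) * h2

private lemma double_sum_succ (f : ℕ → ℕ → ℂ) (n : ℕ) :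
    (∑ i ∈ Finset.range (n+1), ∑ j ∈ Finset.range (n+1), f i j)
    = (∑ i ∈ Finset.range n, ∑ j ∈ Finset.range n, f i j)
      + (∑ i ∈ Finset.range n, f i n) + ((∑ j ∈ Finset.range n, f n j) + f n n) := by
  simp only [Finset.sum_range_succ]
  rw [Finset.sum_add_distrib]

private lemma qform (d : ℕ → ℝ) (x : ℕ → ℂ) : ∀ n : ℕ,
    (∑ i ∈ Finset.range (n+1), ∑ j ∈ Finset.range (n+1),
      (starRingEnd ℂ) (x i) *
        ((if i = j then (d (i+1) : ℂ) else if i + 1 = j ∨ j + 1 = i then -1 else 0) * x j))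
    = (∑ i ∈ Finset.range (n+1), (d (i+1) : ℂ) * (Complex.normSq (x i) : ℂ))
      - ∑ i ∈ Finset.range n,
          ((starRingEnd ℂ) (x i) * x (i+1) + (starRingEnd ℂ) (x (i+1)) * x i) := by
  intro n
  induction n with
  | zero =>
    simp only [zero_add, Finset.sum_range_one, Finset.range_zero, Finset.sum_empty, sub_zero,
      ← Complex.mul_conj]
    rw [if_pos trivial]
    ring
  | succ n ih =>
    rw [double_sum_succ (fun i j => (starRingEnd ℂ) (x i) *
        ((if i = j then (d (i+1) : ℂ) else if i + 1 = j ∨ j + 1 = i then -1 else 0) * x j)) (n+1)]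
    rw [ih]
    have hA : (∑ i ∈ Finset.range (n+1), (starRingEnd ℂ) (x i) *
        ((if i = n+1 then (d (i+1) : ℂ) else if i + 1 = n+1 ∨ (n+1) + 1 = i then -1 else 0) * x (n+1)))
        = -((starRingEnd ℂ) (x n) * x (n+1)) := by
      rw [Finset.sum_range_succ, Finset.sum_eq_zero, zero_add]
      · rw [if_neg (by omega), if_pos (by omega)]; ring
      · intro i hi
        have hi' := Finset.mem_range.mp hi
        rw [if_neg (by omega), if_neg (by omega)]; ring
    have hB : (∑ j ∈ Finset.range (n+1), (starRingEnd ℂ) (x (n+1)) *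
        ((if n+1 = j then (d (n+1+1) : ℂ) else if (n+1) + 1 = j ∨ j + 1 = n+1 then -1 else 0) * x j))
        = -((starRingEnd ℂ) (x (n+1)) * x n) := by
      rw [Finset.sum_range_succ, Finset.sum_eq_zero, zero_add]
      · rw [if_neg (by omega), if_pos (by omega)]; ring
      · intro j hj
        have hj' := Finset.mem_range.mp hj
        rw [if_neg (by omega), if_neg (by omega)]; ring
    rw [hA, hB, if_pos rfl]
    rw [Finset.sum_range_succ (fun i => (d (i+1) : ℂ) * (Complex.normSq (x i) : ℂ)) (n+1),
      Finset.sum_range_succ (fun i =>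
        (starRingEnd ℂ) (x i) * x (i+1) + (starRingEnd ℂ) (x (i+1)) * x i) n,
      ← Complex.mul_conj]
    ring

private lemma part1 (s : ℕ → ℝ) (hs : ∀ r : ℕ, 1 ≤ r → s r = Real.sqrt (1 + 1 / (r : ℝ)))
    (d : ℕ → ℝ) (hd1 : d 1 = s 1) (hd : ∀ r : ℕ, 2 ≤ r → d r = 1 / s (r - 1) + s r)
    (n : ℕ) (hn : 1 ≤ n) (a : ℕ → ℂ) :
    (∑ r ∈ Finset.Icc 1 n, d r * ‖a r‖ ^ 2) -
        ∑ r ∈ Finset.Icc 2 n,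
          (a r * (starRingEnd ℂ) (a (r - 1)) + a (r - 1) * (starRingEnd ℂ) (a r)).re =
      (∑ r ∈ Finset.Icc 2 n,
          ‖(Real.sqrt (s (r - 1)) : ℂ) * a (r - 1) -
            ((Real.sqrt (s (r - 1)) : ℂ))⁻¹ * a r‖ ^ 2) +
        s n * ‖a n‖ ^ 2 := by
  have hspos : ∀ r : ℕ, 1 ≤ r → 0 < s r := by
    intro r hr
    rw [hs r hr]
    exact Real.sqrt_pos.2 (by positivity)
  induction n, hn using Nat.le_induction with
  | base =>
    rw [show (2:ℕ) = 1 + 1 from rfl, Finset.Icc_self, Finset.Icc_eq_empty (by omega)]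
    simp [hd1]
  | succ n hn ih =>
    rw [Finset.sum_Icc_succ_top (by omega : 1 ≤ n + 1),
        Finset.sum_Icc_succ_top (by omega : 2 ≤ n + 1),
        Finset.sum_Icc_succ_top (by omega : 2 ≤ n + 1)]
    simp only [Nat.add_sub_cancel]
    rw [hd (n+1) (by omega)]
    simp only [Nat.add_sub_cancel]
    rw [keyid (s n) (hspos n hn) (a n) (a (n+1))]
    linarith [ih]


/-- With `s r = √(1 + 1/r)`, `d 1 = s 1`, `d r = 1/s (r−1) + s r` for
`r ≥ 2`, one has for all `n ≥ 1` and complex `a₁, …, aₙ`: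
`Σ_{r=1}^n d r |a r|² − Σ_{r=2}^n (a r conj (a (r−1)) + a (r−1) conj (a r))
  = Σ_{r=2}^n |√(s (r−1)) a (r−1) − a r / √(s (r−1))|² + s n |a n|²`.
In particular the tridiagonal matrix `M₂` with diagonal `d` and off-diagonal `−1` is
positive semidefinite. -/
theorem stmt_18
    (s : ℕ → ℝ) (hs : ∀ r : ℕ, 1 ≤ r → s r = Real.sqrt (1 + 1 / (r : ℝ)))
    (d : ℕ → ℝ) (hd1 : d 1 = s 1) (hd : ∀ r : ℕ, 2 ≤ r → d r = 1 / s (r - 1) + s r)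
    (n : ℕ) (hn : 1 ≤ n) (a : ℕ → ℂ) :
    ((∑ r ∈ Finset.Icc 1 n, d r * ‖a r‖ ^ 2) -
        ∑ r ∈ Finset.Icc 2 n,
          (a r * (starRingEnd ℂ) (a (r - 1)) + a (r - 1) * (starRingEnd ℂ) (a r)).re =
      (∑ r ∈ Finset.Icc 2 n,
          ‖(Real.sqrt (s (r - 1)) : ℂ) * a (r - 1) -
            ((Real.sqrt (s (r - 1)) : ℂ))⁻¹ * a r‖ ^ 2) +
        s n * ‖a n‖ ^ 2) ∧
    Matrix.PosSemidef (Matrix.of fun i j : Fin n =>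
      if i = j then (d ((i : ℕ) + 1) : ℂ)
      else if (i : ℕ) + 1 = (j : ℕ) ∨ (j : ℕ) + 1 = (i : ℕ) then -1 else 0) := by
  refine ⟨part1 s hs d hd1 hd n hn a, Matrix.posSemidef_iff_dotProduct_mulVec.mpr ⟨?_, ?_⟩⟩
  · -- Hermitian
    ext i j
    simp only [Matrix.conjTranspose_apply, Matrix.of_apply]
    rcases eq_or_ne i j with rfl | hij
    · simp
    · rw [if_neg (Ne.symm hij), if_neg hij]
      by_cases hc : (i:ℕ) + 1 = (j:ℕ) ∨ (j:ℕ) + 1 = (i:ℕ)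
      · rw [if_pos hc.symm, if_pos hc]; simp
      · rw [if_neg (fun h => hc (Or.symm h)), if_neg hc]; simp
  · intro x
    obtain ⟨m, rfl⟩ : ∃ m, n = m + 1 := ⟨n - 1, by omega⟩
    set x' : ℕ → ℂ := fun k => if h : k < m + 1 then x ⟨k, h⟩ else 0 with hx'def
    have hx'eq : ∀ k : Fin (m+1), x' (k : ℕ) = x k := by
      intro k; simp only [hx'def]; rw [dif_pos k.isLt]
    set b : ℕ → ℂ := fun r => x' (r - 1) with hbdef
    have step1 : dotProduct (star x) (Matrix.mulVec (Matrix.of fun i j : Fin (m+1) =>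
        if i = j then (d ((i : ℕ) + 1) : ℂ)
        else if (i : ℕ) + 1 = (j : ℕ) ∨ (j : ℕ) + 1 = (i : ℕ) then -1 else 0) x)
        = ∑ i ∈ Finset.range (m+1), ∑ j ∈ Finset.range (m+1),
            (starRingEnd ℂ) (x' i) *
              ((if i = j then (d (i+1) : ℂ) else if i + 1 = j ∨ j + 1 = i then -1 else 0) * x' j) := by
      simp only [dotProduct, Matrix.mulVec, Matrix.of_apply, Pi.star_apply,
        Finset.mul_sum]
      rw [← Fin.sum_univ_eq_sum_range]
      refine Finset.sum_congr rfl fun i _ => ?_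
      rw [← Fin.sum_univ_eq_sum_range]
      refine Finset.sum_congr rfl fun j _ => ?_
      simp only [hx'eq, Fin.ext_iff]
      rfl
    rw [step1, qform d x' m]
    have e1 : (∑ i ∈ Finset.range (m+1), (d (i+1) : ℂ) * (Complex.normSq (x' i) : ℂ))
        = ((∑ r ∈ Finset.Icc 1 (m+1), d r * ‖b r‖ ^ 2 : ℝ) : ℂ) := by
      rw [← Finset.Ico_add_one_right_eq_Icc, Finset.sum_Ico_eq_sum_range,
        show m + 1 + 1 - 1 = m + 1 by omega]
      push_cast
      refine Finset.sum_congr rfl fun i _ => ?_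
      have hb : b (1 + i) = x' i := by simp only [hbdef]; congr 1; omega
      rw [hb, ← Complex.sq_norm, add_comm 1 i]
      push_cast
      ring
    have e2 : (∑ i ∈ Finset.range m,
          ((starRingEnd ℂ) (x' i) * x' (i+1) + (starRingEnd ℂ) (x' (i+1)) * x' i))
        = ((∑ r ∈ Finset.Icc 2 (m+1),
            (b r * (starRingEnd ℂ) (b (r-1)) + b (r-1) * (starRingEnd ℂ) (b r)).re : ℝ) : ℂ) := by
      rw [← Finset.Ico_add_one_right_eq_Icc, Finset.sum_Ico_eq_sum_range,
        show m + 1 + 1 - 2 = m by omega]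
      push_cast
      refine Finset.sum_congr rfl fun i _ => ?_
      have hb1 : b (2 + i) = x' (i + 1) := by simp only [hbdef]; congr 1; omega
      have hb2 : b (2 + i - 1) = x' i := by simp only [hbdef]; congr 1; omega
      rw [hb1, hb2]
      simp only [Complex.ext_iff, Complex.add_re, Complex.add_im, Complex.mul_re,
        Complex.mul_im, Complex.conj_re, Complex.conj_im, Complex.ofReal_re, Complex.ofReal_im]
      constructor <;> ring
    rw [e1, e2, ← Complex.ofReal_sub, part1 s hs d hd1 hd (m+1) (by omega) b]
    refine Complex.zero_le_real.2 ?_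
    have h1 : (0:ℝ) ≤ ∑ r ∈ Finset.Icc 2 (m+1),
        ‖(Real.sqrt (s (r - 1)) : ℂ) * b (r - 1) -
          ((Real.sqrt (s (r - 1)) : ℂ))⁻¹ * b r‖ ^ 2 :=
      Finset.sum_nonneg fun r _ => sq_nonneg _
    have h2 : (0:ℝ) ≤ s (m+1) := by
      rw [hs (m+1) (by omega)]; exact Real.sqrt_nonneg _
    exact add_nonneg h1 (mul_nonneg h2 (sq_nonneg _))
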